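/- arXiv:1910.05861 — 2 statements merged into one kernel-verified Lean document; each statement's English description precedes it below -/
import Mathlib

section
/- Let α, c > 0 be real numbers and m, T ≥ 0 integers. Suppose a sequence (E_j) of nonnegative reals satisfies E_{t+1} ≤ α·(E_{t-m} + E_{t-m+1} + ... + E_t) + c for all integers t ≥ 0, and E_j = 0 for j = -m, ..., 0. Then E_{T+1} ≤ c·(1+α)^T for all integers T ≥ 0. -/
/-- Discrete Gronwall lemma with memory (Lemma 1). -/
theorem discrete_gronwall_memory (α c : ℝ) (hα : 0 < α) (hc : 0 < c)
    (m : ℕ) (E : ℤ → ℝ) (hE : ∀ j : ℤ, 0 ≤ E j)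
    (hrec : ∀ t : ℕ, E (t + 1) ≤ α * (∑ k ∈ Finset.range (m + 1), E ((t : ℤ) - m + k)) + c)
    (hinit : ∀ j : ℤ, -(m : ℤ) ≤ j → j ≤ 0 → E j = 0) :
    ∀ T : ℕ, E (T + 1) ≤ c * (1 + α) ^ T := by
  intro T
  induction T using Nat.strong_induction_on with
  | _ t ih =>
    set A := (Finset.range (m + 1)).filter (fun k => m + 1 ≤ t + k) with hAdef
    have h0 : ∀ k ∈ Finset.range (m + 1), k ∉ A → E ((t : ℤ) - m + k) = 0 := by
      intro k hk hk'
      simp only [hAdef, Finset.mem_filter, hk, true_and, not_le] at hk'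
      apply hinit <;> omega
    have key : ∑ k ∈ Finset.range (m + 1), E ((t : ℤ) - m + k)
        ≤ ∑ s ∈ Finset.range t, c * (1 + α) ^ s := by
      rw [← Finset.sum_subset (Finset.filter_subset _ _) h0]
      have himg : ∑ k ∈ A, E ((t : ℤ) - m + k)
          = ∑ s ∈ A.image (fun k => t + k - m - 1), E ((s : ℤ) + 1) := by
        rw [Finset.sum_image]
        · apply Finset.sum_congr rfl
          intro k hk
          simp only [hAdef, Finset.mem_filter, Finset.mem_range] at hk
          congr 1
          omega
        · intro a ha b hb hab
          simp only [hAdef, Finset.mem_coe, Finset.mem_filter, Finset.mem_range] at ha hb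
          beta_reduce at hab
          omega
      rw [himg]
      have hsub : A.image (fun k => t + k - m - 1) ⊆ Finset.range t := by
        intro s hs
        simp only [Finset.mem_image, hAdef, Finset.mem_filter, Finset.mem_range] at hs
        obtain ⟨k, ⟨hk1, hk2⟩, rfl⟩ := hs
        simp only [Finset.mem_range]
        omega
      calc ∑ s ∈ A.image (fun k => t + k - m - 1), E ((s : ℤ) + 1)
          ≤ ∑ s ∈ Finset.range t, E ((s : ℤ) + 1) :=
            Finset.sum_le_sum_of_subset_of_nonneg hsub (fun s _ _ => hE _)
        _ ≤ ∑ s ∈ Finset.range t, c * (1 + α) ^ s := by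
            apply Finset.sum_le_sum
            intro s hs
            exact ih s (Finset.mem_range.mp hs)
    have hg := geom_sum_mul (1 + α) t
    calc E (↑t + 1) ≤ α * (∑ k ∈ Finset.range (m + 1), E ((t : ℤ) - m + k)) + c := hrec t
      _ ≤ α * (∑ s ∈ Finset.range t, c * (1 + α) ^ s) + c := by
          have hα' : (0:ℝ) ≤ α := le_of_lt hα
          nlinarith [key]
      _ = c * (1 + α) ^ t := by
          rw [← Finset.mul_sum]
          linear_combination c * hg
end

section
/- Under the hypotheses of the previous statement (perturbed Euler scheme with Lipschitz constant ℓ, perturbation size ε, time step Δ, equal initial conditions), one has for all T with 2ℓΔ(T+1) ≤ 1 the bound max_{0 ≤ t ≤ T+1} |x̂_t − x_t| ≤ C' ε Δ² (T+1)² with C' = ℓ·e. -/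
set_option maxHeartbeats 1600000 in
/-- Deterministic version of Theorem 2's conclusion: O(ε Δ² T²) error for the
resolved variable of a perturbed Euler scheme when 2ℓΔ(T+1) ≤ 1. -/
theorem perturbed_euler_quadratic_bound
    (ℓ Δ ε : ℝ) (hℓ : 0 < ℓ) (hΔ : 0 < Δ) (hε : 0 ≤ ε)
    (f g ghat : ℝ × ℝ → ℝ)
    (hf : ∀ x x' y y' : ℝ, |f (x, y) - f (x', y')| ≤ ℓ * |x - x'| + ℓ * |y - y'|)
    (hg : ∀ x x' y y' : ℝ, |g (x, y) - g (x', y')| ≤ ℓ * |x - x'| + ℓ * |y - y'|)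
    (hghat : ∀ x y : ℝ, |ghat (x, y) - g (x, y)| ≤ ε)
    (x y xh yh : ℕ → ℝ)
    (hx : ∀ t, x (t + 1) = x t + Δ * f (x t, y t))
    (hy : ∀ t, y (t + 1) = y t + Δ * g (x t, y t))
    (hxh : ∀ t, xh (t + 1) = xh t + Δ * f (xh t, yh t))
    (hyh : ∀ t, yh (t + 1) = yh t + Δ * ghat (xh t, yh t))
    (hx0 : x 0 = xh 0) (hy0 : y 0 = yh 0) :
    ∀ T : ℕ, 2 * ℓ * Δ * (T + 1) ≤ 1 →
      ∀ t ≤ T + 1, |xh t - x t| ≤ (ℓ * Real.exp 1) * ε * Δ ^ 2 * (T + 1) ^ 2 := by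
  set q : ℝ := 2 * ℓ * Δ with hqdef
  have hq0 : 0 < q := by positivity
  -- joint inductive bound
  have key : ∀ t : ℕ,
      |xh t - x t| ≤ (Δ * ε / 2) * (((1 + q) ^ t - 1) / q - t) ∧
      |xh t - x t| + |yh t - y t| ≤ Δ * ε * (((1 + q) ^ t - 1) / q) := by
    intro t
    induction t with
    | zero =>
      simp [hx0, hy0]
    | succ t ih =>
      obtain ⟨ha, hs⟩ := ih
      have hxstep : |xh (t + 1) - x (t + 1)| ≤
          |xh t - x t| + Δ * (ℓ * |xh t - x t| + ℓ * |yh t - y t|) := by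
        rw [hx, hxh]
        have e1 : xh t + Δ * f (xh t, yh t) - (x t + Δ * f (x t, y t))
            = (xh t - x t) + Δ * (f (xh t, yh t) - f (x t, y t)) := by ring
        rw [e1]
        calc |(xh t - x t) + Δ * (f (xh t, yh t) - f (x t, y t))|
            ≤ |xh t - x t| + |Δ * (f (xh t, yh t) - f (x t, y t))| := abs_add_le _ _
          _ = |xh t - x t| + Δ * |f (xh t, yh t) - f (x t, y t)| := by
              rw [abs_mul, abs_of_pos hΔ]
          _ ≤ |xh t - x t| + Δ * (ℓ * |xh t - x t| + ℓ * |yh t - y t|) := by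
              have := hf (xh t) (x t) (yh t) (y t)
              nlinarith
      have hystep : |yh (t + 1) - y (t + 1)| ≤
          |yh t - y t| + Δ * (ε + (ℓ * |xh t - x t| + ℓ * |yh t - y t|)) := by
        rw [hy, hyh]
        have e1 : xh t + Δ * ghat (xh t, yh t) - (x t + Δ * g (x t, y t))
            = (xh t - x t) + Δ * (ghat (xh t, yh t) - g (x t, y t)) := by ring
        have e2 : yh t + Δ * ghat (xh t, yh t) - (y t + Δ * g (x t, y t))
            = (yh t - y t) + Δ * (ghat (xh t, yh t) - g (x t, y t)) := by ring
        rw [e2]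
        have hd : |ghat (xh t, yh t) - g (x t, y t)| ≤
            ε + (ℓ * |xh t - x t| + ℓ * |yh t - y t|) := by
          have e3 : ghat (xh t, yh t) - g (x t, y t)
              = (ghat (xh t, yh t) - g (xh t, yh t)) + (g (xh t, yh t) - g (x t, y t)) := by
            ring
          rw [e3]
          calc |(ghat (xh t, yh t) - g (xh t, yh t)) + (g (xh t, yh t) - g (x t, y t))|
              ≤ |ghat (xh t, yh t) - g (xh t, yh t)| + |g (xh t, yh t) - g (x t, y t)| :=
                abs_add_le _ _
            _ ≤ ε + (ℓ * |xh t - x t| + ℓ * |yh t - y t|) :=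
                add_le_add (hghat _ _) (hg (xh t) (x t) (yh t) (y t))
        calc |(yh t - y t) + Δ * (ghat (xh t, yh t) - g (x t, y t))|
            ≤ |yh t - y t| + |Δ * (ghat (xh t, yh t) - g (x t, y t))| := abs_add_le _ _
          _ = |yh t - y t| + Δ * |ghat (xh t, yh t) - g (x t, y t)| := by
              rw [abs_mul, abs_of_pos hΔ]
          _ ≤ |yh t - y t| + Δ * (ε + (ℓ * |xh t - x t| + ℓ * |yh t - y t|)) := by
              nlinarith
      constructor
      · -- |xh (t+1) - x (t+1)| bound
        have h1 : |xh (t + 1) - x (t + 1)| ≤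
            (Δ * ε / 2) * (((1 + q) ^ t - 1) / q - t)
              + (q / 2) * (Δ * ε * (((1 + q) ^ t - 1) / q)) := by
          have hld : Δ * (ℓ * |xh t - x t| + ℓ * |yh t - y t|)
              = (q / 2) * (|xh t - x t| + |yh t - y t|) := by
            rw [hqdef]; ring
          calc |xh (t + 1) - x (t + 1)|
              ≤ |xh t - x t| + Δ * (ℓ * |xh t - x t| + ℓ * |yh t - y t|) := hxstep
            _ = |xh t - x t| + (q / 2) * (|xh t - x t| + |yh t - y t|) := by rw [hld]
            _ ≤ (Δ * ε / 2) * (((1 + q) ^ t - 1) / q - t)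
                + (q / 2) * (Δ * ε * (((1 + q) ^ t - 1) / q)) := by
                have := mul_le_mul_of_nonneg_left hs (le_of_lt (by positivity : (0:ℝ) < q / 2))
                linarith
        have halg : (Δ * ε / 2) * (((1 + q) ^ t - 1) / q - t)
              + (q / 2) * (Δ * ε * (((1 + q) ^ t - 1) / q))
            = (Δ * ε / 2) * (((1 + q) ^ (t + 1) - 1) / q - (t + 1 : ℕ)) := by
          rw [pow_succ]
          push_cast
          field_simp
          ring
        rw [halg] at h1
        exact h1
      · -- sum bound
        have h2 : |xh (t + 1) - x (t + 1)| + |yh (t + 1) - y (t + 1)| ≤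
            (1 + q) * (|xh t - x t| + |yh t - y t|) + Δ * ε := by
          have hld : Δ * (ℓ * |xh t - x t| + ℓ * |yh t - y t|)
              = (q / 2) * (|xh t - x t| + |yh t - y t|) := by
            rw [hqdef]; ring
          nlinarith [hxstep, hystep]
        have h3 : (1 + q) * (|xh t - x t| + |yh t - y t|) + Δ * ε ≤
            (1 + q) * (Δ * ε * (((1 + q) ^ t - 1) / q)) + Δ * ε := by
          have h1q : (0:ℝ) ≤ 1 + q := by linarith
          nlinarith [mul_le_mul_of_nonneg_left hs h1q]
        have halg : (1 + q) * (Δ * ε * (((1 + q) ^ t - 1) / q)) + Δ * ε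
            = Δ * ε * (((1 + q) ^ (t + 1) - 1) / q) := by
          rw [pow_succ]
          field_simp
          ring
        rw [halg] at h3
        exact le_trans h2 h3
  -- now the analytic part
  intro T hT t ht
  have ht' : (t : ℝ) ≤ (T : ℝ) + 1 := by exact_mod_cast ht
  have ht0 : (0:ℝ) ≤ (t : ℝ) := Nat.cast_nonneg t
  set z : ℝ := q * t with hzdef
  have hz0 : 0 ≤ z := by positivity
  have hz1 : z ≤ 1 := by
    calc z = q * t := rfl
      _ ≤ q * ((T : ℝ) + 1) := by nlinarith
      _ ≤ 1 := hT
  -- (1+q)^t ≤ exp z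
  have hpow : (1 + q) ^ t ≤ Real.exp z := by
    calc (1 + q) ^ t ≤ (Real.exp q) ^ t := by
          apply pow_le_pow_left₀ (by linarith)
          have := Real.add_one_le_exp q
          linarith
      _ = Real.exp ((t : ℝ) * q) := (Real.exp_nat_mul q t).symm
      _ = Real.exp z := by rw [hzdef]; ring_nf
  -- exp z ≤ 1 + z + (3/4) z^2
  have hexp : Real.exp z ≤ 1 + z + 3 / 4 * z ^ 2 := by
    have h := Real.exp_bound' hz0 hz1 (n := 2) (by norm_num)
    have hsum : (∑ m ∈ Finset.range 2, z ^ m / m.factorial) = 1 + z := by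
      simp [Finset.sum_range_succ]
    rw [hsum] at h
    calc Real.exp z ≤ 1 + z + z ^ 2 * (2 + 1) / ((2:ℕ).factorial * 2) := h
      _ = 1 + z + 3 / 4 * z ^ 2 := by
          norm_num [Nat.factorial]
          ring
  have hkey := (key t).1
  have hmain : ((1 + q) ^ t - 1) / q - t ≤ 3 / 4 * q * ((T : ℝ) + 1) ^ 2 := by
    rw [div_sub' (ne_of_gt hq0), div_le_iff₀ hq0]
    have hz' : Real.exp z - 1 - z ≤ 3 / 4 * z ^ 2 := by linarith
    calc (1 + q) ^ t - 1 - q * (t : ℝ) = (1 + q) ^ t - 1 - z := by rw [hzdef]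
      _ ≤ 3 / 4 * z ^ 2 := by linarith
      _ = 3 / 4 * q ^ 2 * (t : ℝ) ^ 2 := by rw [hzdef]; ring
      _ ≤ 3 / 4 * q ^ 2 * ((T : ℝ) + 1) ^ 2 := by gcongr
      _ = 3 / 4 * q * ((T : ℝ) + 1) ^ 2 * q := by ring
  have he : (2:ℝ) ≤ Real.exp 1 := by
    have := Real.add_one_le_exp (1:ℝ)
    linarith
  calc |xh t - x t| ≤ (Δ * ε / 2) * (((1 + q) ^ t - 1) / q - t) := hkey
    _ ≤ (Δ * ε / 2) * (3 / 4 * q * ((T : ℝ) + 1) ^ 2) := by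
        apply mul_le_mul_of_nonneg_left hmain (by positivity)
    _ = 3 / 4 * ℓ * ε * Δ ^ 2 * ((T : ℝ) + 1) ^ 2 := by rw [hqdef]; ring
    _ ≤ (ℓ * Real.exp 1) * ε * Δ ^ 2 * ((T : ℝ) + 1) ^ 2 := by
        have h34 : 3 / 4 * ℓ ≤ ℓ * Real.exp 1 := by nlinarith
        have hnn : (0:ℝ) ≤ ε * Δ ^ 2 * ((T : ℝ) + 1) ^ 2 := by positivity
        nlinarith [mul_le_mul_of_nonneg_right h34 hnn]
end
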